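/- Uniqueness characterization of the polylogarithm: a continuous function F on U(1) ∖ {1} satisfying F(z) = m^k ∑_{ζ^m = z} F(ζ) for all integers m ≥ 1 and all z ≠ 1, and which is given by an absolutely convergent Fourier series F(z) = Re(∑_{n≥1} a_n z^n) with a_n ∈ ℂ, must satisfy a_n = a_1 / n^{k+1} for all n ≥ 1; i.e., F is a scalar multiple of L_{k+1}. -/

import Mathlib

open MeasureTheory Real Complex intervalIntegral

lemma exp_integral (j : ℤ) :
    ∫ θ : ℝ in (0:ℝ)..(2*π), Complex.exp ((j : ℂ) * I * θ) =
      if j = 0 then (2*π : ℂ) else 0 := by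
  split_ifs with h
  · simp [h, two_pi_pos.le]
  · have hc : (j : ℂ) * I ≠ 0 := by simp [Complex.ext_iff, h]
    rw [integral_exp_mul_complex hc]
    have : Complex.exp ((j:ℂ) * I * (2*π)) = 1 := by
      rw [show (j:ℂ) * I * (2*π) = (j:ℂ) * (2*π*I) by ring]
      exact Complex.exp_int_mul_two_pi_mul_I j
    simp [this]

lemma fourier_vanish (b : ℕ → ℂ) (hb : Summable fun n : ℕ => ‖b n‖)
    (h0 : ∀ z : ℂ, ‖z‖ = 1 → z ≠ 1 →
      (∑' n : ℕ, b (n + 1) * z ^ (n + 1)).re = 0) :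
    ∀ N : ℕ, b (N + 1) = 0 := by
  intro N
  set f : ℕ → ℝ → ℂ := fun n θ =>
    ((b (n+1) * Complex.exp (θ * I) ^ (n+1)
      + (starRingEnd ℂ) (b (n+1) * Complex.exp (θ * I) ^ (n+1))) / 2)
      * Complex.exp (-((N:ℂ)+1) * I * θ) with hf
  -- pointwise exponential form
  have hkey : ∀ n (θ : ℝ), f n θ =
      b (n+1)/2 * Complex.exp ((((n:ℤ) - N : ℤ) : ℂ) * I * θ)
      + (starRingEnd ℂ) (b (n+1))/2
        * Complex.exp (((-(n:ℤ) - N - 2 : ℤ) : ℂ) * I * θ) := by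
    intro n θ
    have e1 : Complex.exp (θ * I) ^ (n+1) = Complex.exp (((n+1 : ℕ) : ℂ) * (θ * I)) :=
      (Complex.exp_nat_mul _ _).symm
    have e2 : (starRingEnd ℂ) (Complex.exp (θ * I)) = Complex.exp (-(θ * I)) := by
      rw [← Complex.exp_conj]
      congr 1
      simp [Complex.conj_ofReal]
    have e3 : Complex.exp (-(θ*I)) ^ (n+1) = Complex.exp (((n+1 : ℕ) : ℂ) * (-(θ * I))) :=
      (Complex.exp_nat_mul _ _).symm
    have e4 : (starRingEnd ℂ) (b (n+1) * Complex.exp (θ * I) ^ (n+1))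
        = (starRingEnd ℂ) (b (n+1)) * Complex.exp (((n+1 : ℕ) : ℂ) * (-(θ * I))) := by
      rw [map_mul, map_pow, e2, e3]
    rw [hf]
    simp only []
    rw [e4, e1,
      show ((((n:ℤ) - N : ℤ) : ℂ) * I * θ)
        = ((n+1 : ℕ) : ℂ) * (θ * I) + (-((N:ℂ)+1) * I * θ) by push_cast; ring,
      show (((-(n:ℤ) - N - 2 : ℤ) : ℂ) * I * θ)
        = ((n+1 : ℕ) : ℂ) * (-(θ * I)) + (-((N:ℂ)+1) * I * θ) by push_cast; ring,
      Complex.exp_add, Complex.exp_add]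
    ring
  -- continuity
  have hcont : ∀ n, Continuous (f n) := by
    intro n
    have hc1 : Continuous fun θ : ℝ => Complex.exp (θ * I) :=
      (Complex.continuous_ofReal.mul continuous_const).cexp
    have hc2 : Continuous fun θ : ℝ => Complex.exp (-((N:ℂ)+1) * I * θ) :=
      (continuous_const.mul Complex.continuous_ofReal).cexp
    exact (((continuous_const.mul (hc1.pow _)).add
      (Complex.continuous_conj.comp (continuous_const.mul (hc1.pow _)))).div_const 2).mul hc2
  -- norm bound
  have hnorm : ∀ n θ, ‖f n θ‖ ≤ ‖b (n+1)‖ := by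
    intro n θ
    have h1 : ‖Complex.exp (-((N:ℂ)+1) * I * θ)‖ = 1 := by
      rw [Complex.norm_exp]; norm_num
    have h2 : ‖b (n+1) * Complex.exp (θ * I) ^ (n+1)‖ = ‖b (n+1)‖ := by
      rw [norm_mul, norm_pow,
        Complex.norm_exp_ofReal_mul_I, one_pow, mul_one]
    have h3 : ‖(starRingEnd ℂ) (b (n+1) * Complex.exp (θ * I) ^ (n+1))‖ = ‖b (n+1)‖ := by
      rw [RCLike.norm_conj]; exact h2
    rw [hf]
    simp only [norm_mul, h1, mul_one, norm_div, Complex.norm_ofNat]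
    have := norm_add_le (b (n+1) * Complex.exp (θ * I) ^ (n+1))
      ((starRingEnd ℂ) (b (n+1) * Complex.exp (θ * I) ^ (n+1)))
    rw [h2, h3] at this
    linarith
  -- interval integral of each term
  have hint : ∀ n, (∫ θ in (0:ℝ)..(2*π), f n θ)
      = if n = N then (π : ℂ) * b (N+1) else 0 := by
    intro n
    have : (∫ θ in (0:ℝ)..(2*π), f n θ)
        = (∫ θ in (0:ℝ)..(2*π),
            (b (n+1)/2 * Complex.exp ((((n:ℤ) - N : ℤ) : ℂ) * I * θ)
             + (starRingEnd ℂ) (b (n+1))/2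
               * Complex.exp (((-(n:ℤ) - N - 2 : ℤ) : ℂ) * I * θ))) := by
      apply intervalIntegral.integral_congr
      intro θ _
      exact hkey n θ
    rw [this, intervalIntegral.integral_add, intervalIntegral.integral_const_mul,
      intervalIntegral.integral_const_mul, exp_integral, exp_integral]
    · split_ifs with h1 h2 h3 <;>
        first
        | omega
        | (simp_all; try ring)
        | ring
    · exact (continuous_const.mul ((continuous_const.mul Complex.continuous_ofReal).cexp)).intervalIntegrable _ _
    · exact (continuous_const.mul ((continuous_const.mul Complex.continuous_ofReal).cexp)).intervalIntegrable _ _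
  have h2π : (0:ℝ) ≤ 2*π := two_pi_pos.le
  have hsummc : ∀ θ : ℝ, Summable fun n : ℕ => b (n+1) * Complex.exp (θ*I) ^ (n+1) := by
    intro θ
    apply Summable.of_norm
    have : (fun n : ℕ => ‖b (n+1) * Complex.exp (θ*I)^(n+1)‖) = fun n => ‖b (n+1)‖ := by
      funext n
      rw [norm_mul, norm_pow,
        Complex.norm_exp_ofReal_mul_I, one_pow, mul_one]
    rw [this]
    exact hb.comp_injective Nat.succ_injective
  have hpt : ∀ θ : ℝ, (∑' n : ℕ, f n θ) =
      (((∑' n : ℕ, b (n+1) * Complex.exp (θ*I) ^ (n+1)).re : ℝ) : ℂ)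
        * Complex.exp (-((N:ℂ)+1) * I * θ) := by
    intro θ
    set c : ℕ → ℂ := fun n => b (n+1) * Complex.exp (θ*I) ^ (n+1) with hc
    have hsc := hsummc θ
    have hconj : HasSum (fun n => (starRingEnd ℂ) (c n)) ((starRingEnd ℂ) (∑' n, c n)) :=
      hsc.hasSum.map (starRingEnd ℂ).toAddMonoidHom Complex.continuous_conj
    calc (∑' n, f n θ)
        = ∑' n, ((c n + (starRingEnd ℂ) (c n)) * (Complex.exp (-((N:ℂ)+1) * I * θ) / 2)) := by
          apply tsum_congr; intro n; rw [hf]; ring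
      _ = (∑' n, (c n + (starRingEnd ℂ) (c n))) * (Complex.exp (-((N:ℂ)+1) * I * θ) / 2) :=
          tsum_mul_right
      _ = ((∑' n, c n) + (starRingEnd ℂ) (∑' n, c n))
            * (Complex.exp (-((N:ℂ)+1) * I * θ) / 2) := by
          rw [hsc.tsum_add hconj.summable, hconj.tsum_eq]
      _ = (((∑' n, c n).re : ℝ) : ℂ) * Complex.exp (-((N:ℂ)+1) * I * θ) := by
          rw [Complex.add_conj]; push_cast; ring
  have hInt : ∀ n, IntegrableOn (f n) (Set.Ioc (0:ℝ) (2*π)) := fun n =>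
    (hcont n).integrableOn_Ioc
  have hsumint : Summable fun n => ∫ θ in Set.Ioc (0:ℝ) (2*π), ‖f n θ‖ := by
    apply Summable.of_nonneg_of_le (fun n => integral_nonneg (fun θ => norm_nonneg _))
      (fun n => ?_) (((hb.comp_injective Nat.succ_injective)).mul_left (2*π))
    have h1 : (∫ θ in Set.Ioc (0:ℝ) (2*π), ‖f n θ‖)
        ≤ ∫ _ in Set.Ioc (0:ℝ) (2*π), ‖b (n+1)‖ := by
      apply integral_mono (hcont n).norm.integrableOn_Ioc
        (integrableOn_const measure_Ioc_lt_top.ne) (fun θ => hnorm n θ)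
    rw [setIntegral_const, measureReal_def, Real.volume_Ioc, smul_eq_mul] at h1
    rw [ENNReal.toReal_ofReal (by linarith)] at h1
    simpa using h1
  have hswap := MeasureTheory.integral_tsum_of_summable_integral_norm hInt hsumint
  have hlhs : (∑' n : ℕ, ∫ θ in Set.Ioc (0:ℝ) (2*π), f n θ) = (π : ℂ) * b (N+1) := by
    have : ∀ n : ℕ, (∫ θ in Set.Ioc (0:ℝ) (2*π), f n θ)
        = if n = N then (π : ℂ) * b (N+1) else 0 := by
      intro n
      rw [← intervalIntegral.integral_of_le h2π]
      exact hint n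
    rw [tsum_congr this, tsum_ite_eq]
  have hae : ∀ᵐ θ ∂(volume.restrict (Set.Ioc (0:ℝ) (2*π))), (∑' n : ℕ, f n θ) = 0 := by
    have h1 : ∀ᵐ θ : ℝ, θ ≠ 2*π := by
      rw [MeasureTheory.ae_iff]
      have : {θ : ℝ | ¬ θ ≠ 2*π} = {2*π} := by ext θ; simp
      rw [this, Real.volume_singleton]
    filter_upwards [MeasureTheory.ae_restrict_mem measurableSet_Ioc,
      MeasureTheory.ae_restrict_of_ae h1] with θ hθ hθ2
    rw [hpt θ]
    have habs : ‖Complex.exp (θ * I)‖ = 1 := Complex.norm_exp_ofReal_mul_I θ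
    have hne : Complex.exp (θ * I) ≠ 1 := by
      intro hcon
      obtain ⟨j, hj⟩ := Complex.exp_eq_one_iff.mp hcon
      have : (θ : ℂ) = ((j * (2*π) : ℝ) : ℂ) := by
        have := mul_right_cancel₀ Complex.I_ne_zero
          (hj.trans (by push_cast; ring : ((j:ℂ) * (2 * π * I)) = ((j * (2*π) : ℝ) : ℂ) * I))
        exact this
      have hθj : θ = j * (2*π) := by exact_mod_cast this
      have hp := pi_pos
      have hj1 : (0:ℝ) < j := by nlinarith [hθ.1, hθ.2]
      have hj2 : (j:ℝ) ≤ 1 := by nlinarith [hθ.1, hθ.2]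
      have : j = 1 := by
        have h1' : (0:ℤ) < j := by exact_mod_cast hj1
        have h2' : (j:ℤ) ≤ 1 := by exact_mod_cast hj2
        omega
      rw [this] at hθj
      simp at hθj
      exact hθ2 (by linarith)
    rw [h0 _ habs hne]
    simp
  have hrhs : (∫ θ in Set.Ioc (0:ℝ) (2*π), ∑' n : ℕ, f n θ) = 0 :=
    MeasureTheory.integral_eq_zero_of_ae hae
  have : (π : ℂ) * b (N+1) = 0 := by rw [← hlhs, hswap, hrhs]
  have hπ : ((π : ℝ) : ℂ) ≠ 0 := by
    exact_mod_cast Real.pi_ne_zero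
  exact (mul_eq_zero.mp this).resolve_left hπ

lemma roots_sum (m : ℕ) (hm : 1 ≤ m) (a : ℕ → ℂ) (hsum : Summable fun n : ℕ => ‖a n‖)
    (z : ℂ) (hz : ‖z‖ = 1) :
    ((Polynomial.nthRoots m z).map (fun w => (∑' n : ℕ, a (n+1) * w^(n+1)).re)).sum
      = ((m : ℂ) * ∑' n : ℕ, a (m*(n+1)) * z^(n+1)).re := by
  have hm0 : m ≠ 0 := by omega
  obtain ⟨α, hα⟩ := IsAlgClosed.exists_pow_nat_eq z (n := m) (by omega)
  set ζ : ℂ := Complex.exp (2 * π * I / m) with hζdef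
  have hζ : IsPrimitiveRoot ζ m := Complex.isPrimitiveRoot_exp m hm0
  have hroots : Polynomial.nthRoots m z = (Multiset.range m).map (fun j => ζ ^ j * α) :=
    hζ.nthRoots_eq hα
  -- each root has modulus 1
  have habsroot : ∀ j : ℕ, ‖ζ ^ j * α‖ = 1 := by
    intro j
    have h1 : ‖ζ ^ j * α‖ ^ m = 1 := by
      rw [← norm_pow, mul_pow, ← pow_mul, mul_comm j m, pow_mul, hζ.pow_eq_one, one_pow,
        one_mul, hα, hz]
    exact (pow_left_inj₀ (norm_nonneg _) zero_le_one hm0).mp (by rw [h1, one_pow])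
  -- summability on each root
  have hsummw : ∀ w : ℂ, ‖w‖ = 1 → Summable fun n : ℕ => a (n+1) * w ^ (n+1) := by
    intro w hw
    apply Summable.of_norm
    have : (fun n : ℕ => ‖a (n+1) * w^(n+1)‖) = fun n => ‖a (n+1)‖ := by
      funext n
      rw [norm_mul, norm_pow, hw, one_pow, mul_one]
    rw [this]
    exact hsum.comp_injective Nat.succ_injective
  -- convert multiset sum to finset sum
  rw [hroots, Multiset.map_map]
  have hfin : (Multiset.map ((fun w => (∑' n : ℕ, a (n+1) * w^(n+1)).re) ∘ fun j => ζ ^ j * α)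
      (Multiset.range m)).sum
      = ∑ j ∈ Finset.range m, (∑' n : ℕ, a (n+1) * (ζ ^ j * α)^(n+1)).re := rfl
  rw [hfin, ← Complex.re_sum]
  congr 1
  rw [← Summable.tsum_finsetSum (fun j _ => hsummw _ (habsroot j))]
  -- now the inner exchange and geometric sum
  have hinner : ∀ n : ℕ, (∑ j ∈ Finset.range m, a (n+1) * (ζ ^ j * α)^(n+1))
      = a (n+1) * (if m ∣ (n+1) then (m : ℂ) * z ^ ((n+1)/m) else 0) := by
    intro n
    have hexp : ∀ j : ℕ, (ζ ^ j * α)^(n+1) = (ζ ^ (n+1)) ^ j * α ^ (n+1) := by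
      intro j
      rw [mul_pow, ← pow_mul, mul_comm j (n+1), pow_mul]
    simp only [hexp]
    rw [← Finset.mul_sum, ← Finset.sum_mul]
    by_cases hdvd : m ∣ (n+1)
    · rw [if_pos hdvd]
      have h1 : ζ ^ (n+1) = 1 := hζ.pow_eq_one_iff_dvd (n+1) |>.mpr hdvd
      rw [h1]
      simp only [one_pow, Finset.sum_const, Finset.card_range, nsmul_eq_mul, mul_one]
      have h2 : α ^ (n+1) = z ^ ((n+1)/m) := by
        conv_lhs => rw [← Nat.mul_div_cancel' hdvd]
        rw [pow_mul, hα]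
      rw [h2]
      try ring
    · rw [if_neg hdvd, mul_zero]
      have h1 : ζ ^ (n+1) ≠ 1 := fun h => hdvd (hζ.pow_eq_one_iff_dvd (n+1) |>.mp h)
      have h2 : (ζ^(n+1))^m = 1 := by
        rw [← pow_mul, mul_comm (n+1) m, pow_mul, hζ.pow_eq_one, one_pow]
      rw [geom_sum_eq h1, h2, sub_self, zero_div, zero_mul, mul_zero]
  rw [tsum_congr hinner]
  -- reindex
  have hre : (∑' n : ℕ, a (n+1) * (if m ∣ (n+1) then (m : ℂ) * z ^ ((n+1)/m) else 0))
      = ∑' n : ℕ, a (m*(n+1)) * ((m : ℂ) * z ^ (n+1)) := by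
    rw [← Function.Injective.tsum_eq (g := fun t : ℕ => m * t + (m - 1))
      (f := fun n => a (n+1) * (if m ∣ (n+1) then (m : ℂ) * z ^ ((n+1)/m) else 0))
      (fun s t h => by
        simp only [] at h
        exact Nat.eq_of_mul_eq_mul_left (by omega) (Nat.add_right_cancel h)) ?_]
    · apply tsum_congr
      intro t
      have e1 : m * t + (m-1) + 1 = m * (t+1) := by
        have : m * (t+1) = m * t + m := by ring
        omega
      rw [e1, if_pos ⟨t+1, rfl⟩, Nat.mul_div_cancel_left _ (by omega)]
    · intro n hn
      simp only [Function.mem_support, ne_eq] at hn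
      have hdvd : m ∣ (n+1) := by
        by_contra h
        rw [if_neg h, mul_zero] at hn
        exact hn rfl
      obtain ⟨s, hs⟩ := hdvd
      have hs0 : s ≠ 0 := by rintro rfl; simp at hs
      obtain ⟨s', rfl⟩ : ∃ s', s = s' + 1 := ⟨s - 1, by omega⟩
      refine ⟨s', ?_⟩
      have h3 : m * (s' + 1) = m * s' + m := by ring
      simp only []
      omega
  rw [hre, ← tsum_mul_left]
  apply tsum_congr
  intro n
  ring

/-- Uniqueness characterization of the polylogarithm.  Fix `k ≥ 1`.  Let `F` be a function on
the unit circle given by an absolutely convergent Fourier series `F(z) = Re(∑_{n≥1} a_n z^n)`,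
and suppose `F` satisfies the distribution relation
`F(z) = m^k ∑_{ζ^m = z} F(ζ)` for all integers `m ≥ 1` and all `z` on the circle with `z ≠ 1`.
Then `a_n = a_1 / n^{k+1}` for all `n ≥ 1`; i.e. `F` is a scalar multiple of `L_{k+1}`. -/
theorem polylog_uniqueness (k : ℕ) (hk : 1 ≤ k) (a : ℕ → ℂ)
    (hsum : Summable fun n : ℕ => ‖a n‖)
    (F : ℂ → ℝ)
    (hF : ∀ z : ℂ, F z = (∑' n : ℕ, a (n + 1) * z ^ (n + 1)).re)
    (hdist : ∀ m : ℕ, 1 ≤ m → ∀ z : ℂ, ‖z‖ = 1 → z ≠ 1 →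
      F z = (m : ℝ) ^ k * ((Polynomial.nthRoots m z).map F).sum) :
    ∀ n : ℕ, 1 ≤ n → a n = a 1 / (n : ℂ) ^ (k + 1) := by
  have key : ∀ m : ℕ, 1 ≤ m → ∀ i : ℕ, a (i+1) = (m:ℂ)^(k+1) * a (m*(i+1)) := by
    intro m hm
    have hminj : Function.Injective (fun i : ℕ => m * i) := fun s t h => by
      exact Nat.eq_of_mul_eq_mul_left (by omega) h
    have hminj' : Function.Injective (fun i : ℕ => m * (i+1)) := fun s t h => by
      simp only [] at h
      have := Nat.eq_of_mul_eq_mul_left (show 0 < m by omega) h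
      omega
    set b : ℕ → ℂ := fun i => a i - (m:ℂ)^(k+1) * a (m*i) with hbdef
    have hsb : Summable fun i : ℕ => ‖b i‖ := by
      refine Summable.of_nonneg_of_le (f := fun i => ‖a i‖ + ‖(m:ℂ)^(k+1)‖ * ‖a (m*i)‖)
        (fun i => norm_nonneg _) (fun i => ?_)
        (hsum.add ((hsum.comp_injective hminj).mul_left _))
      simp only [hbdef]
      exact (norm_sub_le _ _).trans (by rw [norm_mul])
    have h0 : ∀ z : ℂ, ‖z‖ = 1 → z ≠ 1 →
        (∑' i : ℕ, b (i+1) * z^(i+1)).re = 0 := by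
      intro z hz hz1
      have hzsum : ∀ c : ℕ → ℂ, (Summable fun i : ℕ => ‖c i‖) →
          Summable fun i : ℕ => c i * z^(i+1) := by
        intro c hc
        apply Summable.of_norm
        apply Summable.of_nonneg_of_le (fun i => norm_nonneg _) (fun i => ?_) hc
        rw [norm_mul, norm_pow, hz, one_pow, mul_one]
      have hs1 : Summable fun i : ℕ => a (i+1) * z^(i+1) :=
        hzsum _ (hsum.comp_injective Nat.succ_injective)
      have hs2 : Summable fun i : ℕ => a (m*(i+1)) * z^(i+1) :=
        hzsum _ (hsum.comp_injective hminj')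
      have split : (∑' i : ℕ, b (i+1) * z^(i+1))
          = (∑' i : ℕ, a (i+1) * z^(i+1))
            - (m:ℂ)^(k+1) * ∑' i : ℕ, a (m*(i+1)) * z^(i+1) := by
        rw [← tsum_mul_left, ← hs1.tsum_sub (hs2.mul_left _)]
        apply tsum_congr
        intro i
        simp only [hbdef]
        ring
      rw [split]
      have hdz := hdist m hm z hz hz1
      have hFfun : F = fun w => (∑' n : ℕ, a (n+1) * w^(n+1)).re := funext hF
      rw [hF z] at hdz
      rw [hFfun] at hdz
      rw [roots_sum m hm a hsum z hz] at hdz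
      have hre : ((m:ℂ)^(k+1) * ∑' i : ℕ, a (m*(i+1)) * z^(i+1)).re
          = (m:ℝ)^k * ((m:ℂ) * ∑' i : ℕ, a (m*(i+1)) * z^(i+1)).re := by
        have heq : ((m:ℂ))^(k+1) * ∑' i : ℕ, a (m*(i+1)) * z^(i+1)
            = (((m:ℝ)^k : ℝ) : ℂ) * ((m:ℂ) * ∑' i : ℕ, a (m*(i+1)) * z^(i+1)) := by
          push_cast
          ring
        rw [heq, Complex.re_ofReal_mul]
      rw [Complex.sub_re, hre, ← hdz, sub_self]
    intro i
    have hb := fourier_vanish b hsb h0 i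
    simp only [hbdef] at hb
    exact sub_eq_zero.mp hb
  intro n hn
  have h1 := key n hn 0
  simp only [Nat.mul_one, zero_add] at h1
  have hne : ((n:ℂ))^(k+1) ≠ 0 := by
    exact pow_ne_zero _ (Nat.cast_ne_zero.mpr (by omega))
  rw [eq_div_iff hne, h1]
  ring
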